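/- Let 0 < k < 1 and δ ∈ {1,-1}. Then u(t,x) = c1 + c2·e^{-x} - (1 - e^{-x}/k)·t + (δ/k)·[(k + e^{-x}/2)·x - 3√(k(k - e^{-x})) + (2k + e^{-x})·log(√k + √(k - e^{-x}))] satisfies the PDE u_t + (u_x + u_xx)^2 = 0 for all t and all x > -log k. -/

import Mathlib

lemma aux_exp (x : ℝ) : HasDerivAt (fun y : ℝ => Real.exp (-y)) (-Real.exp (-x)) x := by
  simpa [Function.comp_def] using (Real.hasDerivAt_exp (-x)).comp x (hasDerivAt_neg x)

lemma aux1 (k : ℝ) (hk : 0 < k) (x : ℝ) (hx : Real.exp (-x) < k) :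
    HasDerivAt (fun y => (k + Real.exp (-y) / 2) * y - 3 * Real.sqrt (k * (k - Real.exp (-y)))
        + (2 * k + Real.exp (-y)) * Real.log (Real.sqrt k + Real.sqrt (k - Real.exp (-y))))
      (-(Real.exp (-x) / 2) * x
        - Real.exp (-x) * Real.log (Real.sqrt k + Real.sqrt (k - Real.exp (-x)))
        + Real.sqrt k * Real.sqrt (k - Real.exp (-x))) x := by
  have hkw : 0 < k - Real.exp (-x) := sub_pos.2 hx
  set w := Real.exp (-x) with hw
  have ha : 0 < Real.sqrt k := Real.sqrt_pos.2 hk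
  have hb : 0 < Real.sqrt (k - w) := Real.sqrt_pos.2 hkw
  have hab : 0 < Real.sqrt k + Real.sqrt (k - w) := by positivity
  have ha2 : Real.sqrt k ^ 2 = k := Real.sq_sqrt hk.le
  have hb2 : Real.sqrt (k - w) ^ 2 = k - w := Real.sq_sqrt hkw.le
  have h_exp : HasDerivAt (fun y : ℝ => Real.exp (-y)) (-w) x := aux_exp x
  have h_inner : HasDerivAt (fun y : ℝ => k - Real.exp (-y)) w x := by
    simpa [Pi.sub_def] using (hasDerivAt_const x k).sub h_exp
  have h_sqrt : HasDerivAt (fun y : ℝ => Real.sqrt (k - Real.exp (-y)))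
      (1 / (2 * Real.sqrt (k - w)) * w) x :=
    (Real.hasDerivAt_sqrt hkw.ne').comp x h_inner
  have h_sqrt2 : HasDerivAt (fun y : ℝ => Real.sqrt (k * (k - Real.exp (-y))))
      (1 / (2 * Real.sqrt (k * (k - w))) * (k * w)) x :=
    (Real.hasDerivAt_sqrt (by positivity)).comp x (h_inner.const_mul k)
  have h_log : HasDerivAt (fun y : ℝ => Real.log (Real.sqrt k + Real.sqrt (k - Real.exp (-y))))
      ((Real.sqrt k + Real.sqrt (k - w))⁻¹ * (1 / (2 * Real.sqrt (k - w)) * w)) x := by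
    simpa [Function.comp_def, Pi.add_def] using (Real.hasDerivAt_log hab.ne').comp x ((hasDerivAt_const x (Real.sqrt k)).add h_sqrt)
  have T1 : HasDerivAt (fun y : ℝ => (k + Real.exp (-y) / 2) * y)
      ((0 + -w / 2) * x + (k + w / 2) * 1) x :=
    ((hasDerivAt_const x k).add (h_exp.div_const 2)).mul (hasDerivAt_id x)
  have T3 : HasDerivAt (fun y : ℝ => (2 * k + Real.exp (-y)) *
      Real.log (Real.sqrt k + Real.sqrt (k - Real.exp (-y))))
      ((0 + -w) * Real.log (Real.sqrt k + Real.sqrt (k - w)) + (2 * k + w) *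
        ((Real.sqrt k + Real.sqrt (k - w))⁻¹ * (1 / (2 * Real.sqrt (k - w)) * w))) x :=
    ((hasDerivAt_const x (2 * k)).add h_exp).mul h_log
  have H := (T1.sub (h_sqrt2.const_mul 3)).add T3
  refine H.congr_deriv ?_
  have hm : Real.sqrt (k * (k - w)) = Real.sqrt k * Real.sqrt (k - w) := Real.sqrt_mul hk.le _
  rw [hm]
  set a := Real.sqrt k with hadef
  set b := Real.sqrt (k - w) with hbdef
  have h1 : k = a ^ 2 := ha2.symm
  have h2 : w = a ^ 2 - b ^ 2 := by rw [ha2, hb2]; ring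
  rw [h1, h2]
  field_simp
  ring

lemma aux2 (k : ℝ) (hk : 0 < k) (x : ℝ) (hx : Real.exp (-x) < k) :
    HasDerivAt (fun y => -(Real.exp (-y) / 2) * y
        - Real.exp (-y) * Real.log (Real.sqrt k + Real.sqrt (k - Real.exp (-y)))
        + Real.sqrt k * Real.sqrt (k - Real.exp (-y)))
      (Real.exp (-x) / 2 * x
        + Real.exp (-x) * Real.log (Real.sqrt k + Real.sqrt (k - Real.exp (-x)))) x := by
  have hkw : 0 < k - Real.exp (-x) := sub_pos.2 hx
  set w := Real.exp (-x) with hw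
  have ha : 0 < Real.sqrt k := Real.sqrt_pos.2 hk
  have hb : 0 < Real.sqrt (k - w) := Real.sqrt_pos.2 hkw
  have hab : 0 < Real.sqrt k + Real.sqrt (k - w) := by positivity
  have ha2 : Real.sqrt k ^ 2 = k := Real.sq_sqrt hk.le
  have hb2 : Real.sqrt (k - w) ^ 2 = k - w := Real.sq_sqrt hkw.le
  have h_exp : HasDerivAt (fun y : ℝ => Real.exp (-y)) (-w) x := aux_exp x
  have h_inner : HasDerivAt (fun y : ℝ => k - Real.exp (-y)) w x := by
    simpa [Pi.sub_def] using (hasDerivAt_const x k).sub h_exp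
  have h_sqrt : HasDerivAt (fun y : ℝ => Real.sqrt (k - Real.exp (-y)))
      (1 / (2 * Real.sqrt (k - w)) * w) x :=
    (Real.hasDerivAt_sqrt hkw.ne').comp x h_inner
  have h_log : HasDerivAt (fun y : ℝ => Real.log (Real.sqrt k + Real.sqrt (k - Real.exp (-y))))
      ((Real.sqrt k + Real.sqrt (k - w))⁻¹ * (1 / (2 * Real.sqrt (k - w)) * w)) x := by
    simpa [Function.comp_def, Pi.add_def] using (Real.hasDerivAt_log hab.ne').comp x ((hasDerivAt_const x (Real.sqrt k)).add h_sqrt)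
  have T1 : HasDerivAt (fun y : ℝ => -(Real.exp (-y) / 2) * y)
      (-(-w / 2) * x + -(w / 2) * 1) x := ((h_exp.div_const 2).neg).mul (hasDerivAt_id x)
  have T2 : HasDerivAt (fun y : ℝ => Real.exp (-y) *
      Real.log (Real.sqrt k + Real.sqrt (k - Real.exp (-y))))
      (-w * Real.log (Real.sqrt k + Real.sqrt (k - w)) +
        w * ((Real.sqrt k + Real.sqrt (k - w))⁻¹ * (1 / (2 * Real.sqrt (k - w)) * w))) x :=
    h_exp.mul h_log
  have T3 : HasDerivAt (fun y : ℝ => Real.sqrt k * Real.sqrt (k - Real.exp (-y)))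
      (Real.sqrt k * (1 / (2 * Real.sqrt (k - w)) * w)) x := h_sqrt.const_mul _
  have H := (T1.sub T2).add T3
  refine H.congr_deriv ?_
  set a := Real.sqrt k with hadef
  set b := Real.sqrt (k - w) with hbdef
  have h2 : w = a ^ 2 - b ^ 2 := by rw [ha2, hb2]; ring
  rw [h2]
  field_simp
  ring

theorem stmt7 (k δ c1 c2 : ℝ)
    (hk : 0 < k)
    (hk1 : k < 1)
    (hδ : δ = 1 ∨ δ = -1)
    (u : ℝ → ℝ → ℝ)
    (hu : ∀ t x : ℝ, u t x = c1 + c2 * Real.exp (-x) - (1 - Real.exp (-x) / k) * t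
      + (δ / k) * ((k + Real.exp (-x) / 2) * x - 3 * Real.sqrt (k * (k - Real.exp (-x)))
        + (2 * k + Real.exp (-x)) * Real.log (Real.sqrt k + Real.sqrt (k - Real.exp (-x))))) :
    ∀ t x : ℝ, x > -Real.log k →
      deriv (fun s => u s x) t
      + (deriv (fun y => u t y) x
         + deriv (fun y => deriv (fun z => u t z) y) x) ^ 2 = 0 := by
  intro t x hx
  have hw : Real.exp (-x) < k := by
    have : Real.exp (-x) < Real.exp (Real.log k) := Real.exp_lt_exp.2 (by linarith)
    rwa [Real.exp_log hk] at this
  -- time derivative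
  have hT : deriv (fun s => u s x) t = -(1 - Real.exp (-x) / k) := by
    have heq : (fun s => u s x) = fun s => c1 + c2 * Real.exp (-x)
        - (1 - Real.exp (-x) / k) * s
        + (δ / k) * ((k + Real.exp (-x) / 2) * x - 3 * Real.sqrt (k * (k - Real.exp (-x)))
          + (2 * k + Real.exp (-x)) * Real.log (Real.sqrt k + Real.sqrt (k - Real.exp (-x)))) :=
      funext fun s => hu s x
    rw [heq]
    have H : HasDerivAt (fun s : ℝ => c1 + c2 * Real.exp (-x)
        - (1 - Real.exp (-x) / k) * s
        + (δ / k) * ((k + Real.exp (-x) / 2) * x - 3 * Real.sqrt (k * (k - Real.exp (-x)))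
          + (2 * k + Real.exp (-x)) * Real.log (Real.sqrt k + Real.sqrt (k - Real.exp (-x)))))
        (-(1 - Real.exp (-x) / k)) t := by
      simpa [Pi.add_def, Pi.sub_def] using (((hasDerivAt_const t (c1 + c2 * Real.exp (-x))).sub
        ((hasDerivAt_id t).const_mul (1 - Real.exp (-x) / k))).add
        (hasDerivAt_const t ((δ / k) * ((k + Real.exp (-x) / 2) * x
          - 3 * Real.sqrt (k * (k - Real.exp (-x)))
          + (2 * k + Real.exp (-x)) * Real.log (Real.sqrt k + Real.sqrt (k - Real.exp (-x)))))))
    exact H.deriv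
  -- spatial first derivative function
  set D1 : ℝ → ℝ := fun y => -c2 * Real.exp (-y) - t * (Real.exp (-y) / k)
    + (δ / k) * (-(Real.exp (-y) / 2) * y
      - Real.exp (-y) * Real.log (Real.sqrt k + Real.sqrt (k - Real.exp (-y)))
      + Real.sqrt k * Real.sqrt (k - Real.exp (-y))) with hD1def
  have hD1 : ∀ y : ℝ, Real.exp (-y) < k → HasDerivAt (u t) (D1 y) y := by
    intro y hy
    have heq : u t = fun y => c1 + c2 * Real.exp (-y)
        - (1 - Real.exp (-y) / k) * t
        + (δ / k) * ((k + Real.exp (-y) / 2) * y - 3 * Real.sqrt (k * (k - Real.exp (-y)))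
          + (2 * k + Real.exp (-y)) * Real.log (Real.sqrt k + Real.sqrt (k - Real.exp (-y)))) :=
      funext fun z => hu t z
    rw [heq]
    have A : HasDerivAt (fun y : ℝ => c1 + c2 * Real.exp (-y)) (0 + c2 * -Real.exp (-y)) y :=
      (hasDerivAt_const y c1).add ((aux_exp y).const_mul c2)
    have B : HasDerivAt (fun y : ℝ => (1 - Real.exp (-y) / k) * t)
        ((0 - -Real.exp (-y) / k) * t) y :=
      (((hasDerivAt_const y (1:ℝ)).sub ((aux_exp y).div_const k)).mul_const t)
    have C := (aux1 k hk y hy).const_mul (δ / k)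
    have H := (A.sub B).add C
    refine H.congr_deriv ?_
    rw [hD1def]
    ring
  -- value of the first spatial derivative at x
  have hB : deriv (fun y => u t y) x = D1 x := (hD1 x hw).deriv
  -- second spatial derivative
  have hopen : IsOpen {y : ℝ | Real.exp (-y) < k} :=
    isOpen_lt (by continuity) continuous_const
  have hev : (fun y => deriv (fun z => u t z) y) =ᶠ[nhds x] D1 :=
    Filter.eventually_of_mem (hopen.mem_nhds hw) fun y hy => (hD1 y hy).deriv
  have hD2 : HasDerivAt D1 (-c2 * -Real.exp (-x) - t * (-Real.exp (-x) / k)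
      + (δ / k) * (Real.exp (-x) / 2 * x
        + Real.exp (-x) * Real.log (Real.sqrt k + Real.sqrt (k - Real.exp (-x))))) x := by
    rw [hD1def]
    exact ((((aux_exp x).const_mul (-c2)).sub (((aux_exp x).div_const k).const_mul t)).add
      ((aux2 k hk x hw).const_mul (δ / k)))
  have hC : deriv (fun y => deriv (fun z => u t z) y) x
      = -c2 * -Real.exp (-x) - t * (-Real.exp (-x) / k)
      + (δ / k) * (Real.exp (-x) / 2 * x
        + Real.exp (-x) * Real.log (Real.sqrt k + Real.sqrt (k - Real.exp (-x)))) := by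
    rw [hev.deriv_eq]
    exact hD2.deriv
  rw [hT, hB, hC, hD1def]
  have hδ2 : δ ^ 2 = 1 := by rcases hδ with rfl | rfl <;> norm_num
  have hkw : (0:ℝ) < k - Real.exp (-x) := sub_pos.2 hw
  have key : (D1 x + (-c2 * -Real.exp (-x) - t * (-Real.exp (-x) / k)
      + (δ / k) * (Real.exp (-x) / 2 * x
        + Real.exp (-x) * Real.log (Real.sqrt k + Real.sqrt (k - Real.exp (-x)))))) ^ 2
      = δ ^ 2 * (k * (k - Real.exp (-x))) / k ^ 2 := by
    have h1 : D1 x + (-c2 * -Real.exp (-x) - t * (-Real.exp (-x) / k)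
      + (δ / k) * (Real.exp (-x) / 2 * x
        + Real.exp (-x) * Real.log (Real.sqrt k + Real.sqrt (k - Real.exp (-x)))))
      = δ / k * (Real.sqrt k * Real.sqrt (k - Real.exp (-x))) := by
      rw [hD1def]; ring
    rw [h1, mul_pow, mul_pow, Real.sq_sqrt hk.le, Real.sq_sqrt hkw.le, div_pow]; ring
  rw [← hD1def, key, hδ2]
  field_simp
  ring
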